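/- Attainment of the Benders subproblem supremum: for any ȳ, v̄ : I → ℝ with ȳ_i ≥ 0 and v̄_i ≥ 0 for all i ∈ I, there exists a subproblem-feasible tuple (x, ρ, τ, π, σ) for (ȳ, v̄) whose coverage satisfies Z(x, τ, π) = φ'(ȳ, v̄); that is, the supremum defining φ'(ȳ, v̄) is attained. -/
import Mathlib


/-- A tuple `(x, ρ, τ, π, σ)` is subproblem-feasible for master solution
`(ȳ, v̄)` of the Benders decomposition. -/
def SubFeasible {I J : Type*} [Fintype I] [Fintype J]
    (d dhat : J → ℝ) (Γ : ℕ) (cov : J → Finset I) (ybar vbar : I → ℝ)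
    (x : I → J → ℝ) (ρ : I → ℝ) (τ : ℝ) (π : J → ℝ) (σ : I → J → ℝ) : Prop :=
  (∀ i j, 0 ≤ x i j) ∧ (∀ i, 0 ≤ ρ i) ∧ 0 ≤ τ ∧ (∀ j, 0 ≤ π j) ∧
  (∀ i j, 0 ≤ σ i j) ∧
  (∀ i j, i ∉ cov j → x i j = 0) ∧
  (∀ i, ∑ j, d j * x i j + (Γ : ℝ) * ρ i + ∑ j, σ i j ≤ vbar i) ∧
  (∀ j, ∑ i, dhat j * x i j ≤ τ + π j) ∧
  (∀ i j, dhat j * x i j ≤ σ i j + ρ i) ∧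
  (∀ j, ∑ i, x i j ≤ 1) ∧
  (∀ j, ∀ i ∈ cov j, x i j ≤ ybar i)

/-- The coverage `Z(x, τ, π)` achieved by a subproblem tuple. -/
def coverage {I J : Type*} [Fintype I] [Fintype J]
    (d : J → ℝ) (Γ : ℕ) (x : I → J → ℝ) (τ : ℝ) (π : J → ℝ) : ℝ :=
  ∑ i, ∑ j, d j * x i j - (Γ : ℝ) * τ - ∑ j, π j

/-- The Benders subproblem value `φ'(ȳ, v̄)`: the supremum of the coverage over
all subproblem-feasible tuples for `(ȳ, v̄)`. -/
noncomputable def phi' {I J : Type*} [Fintype I] [Fintype J]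
    (d dhat : J → ℝ) (Γ : ℕ) (cov : J → Finset I) (ybar vbar : I → ℝ) : ℝ :=
  sSup {t : ℝ | ∃ x ρ τ π σ,
    SubFeasible d dhat Γ cov ybar vbar x ρ τ π σ ∧ t = coverage d Γ x τ π}


/-- tuple space -/
abbrev BTup (I J : Type*) : Type _ := (I → J → ℝ) × (I → ℝ) × ℝ × (J → ℝ) × (I → J → ℝ)

lemma min_add_min_ge {a b s M : ℝ} (ha : 0 ≤ a) (hb : 0 ≤ b) (hM : 0 ≤ M)
    (hab : s ≤ a + b) (hsM : s ≤ M) : s ≤ min a M + min b M := by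
  rcases le_total a M with h | h <;> rcases le_total b M with h' | h' <;>
    simp [min_eq_left, min_eq_right, h, h'] <;> linarith

theorem benders_subproblem_sup_attained {I J : Type*}
    [Fintype I] [Nonempty I] [Fintype J] [Nonempty J]
    (d dhat : J → ℝ) (hd : ∀ j, 0 ≤ d j) (hdhat : ∀ j, 0 ≤ dhat j)
    (Γ : ℕ) (cov : J → Finset I)
    (ybar vbar : I → ℝ) (hybar : ∀ i, 0 ≤ ybar i) (hvbar : ∀ i, 0 ≤ vbar i) :
    ∃ x ρ τ π σ, SubFeasible d dhat Γ cov ybar vbar x ρ τ π σ ∧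
      coverage d Γ x τ π = phi' d dhat Γ cov ybar vbar := by
  classical
  set M : ℝ := ∑ j, dhat j with hM
  have hM0 : 0 ≤ M := Finset.sum_nonneg fun j _ => hdhat j
  have hdM : ∀ j, dhat j ≤ M := fun j =>
    Finset.single_le_sum (f := dhat) (fun j _ => hdhat j) (Finset.mem_univ j)
  -- the feasible set in tuple space
  set F : Set (BTup I J) := {p | SubFeasible d dhat Γ cov ybar vbar
      p.1 p.2.1 p.2.2.1 p.2.2.2.1 p.2.2.2.2} with hFdef
  -- coverage as a function on tuple space
  set cvg : BTup I J → ℝ := fun p => coverage d Γ p.1 p.2.2.1 p.2.2.2.1 with hcvg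
  have hcvgCont : Continuous cvg := by
    unfold cvg
    unfold coverage
    fun_prop
  -- each feasible x is ≤ 1 componentwise
  have hx1 : ∀ p ∈ F, ∀ i j, p.1 i j ≤ 1 := by
    intro p hp i j
    obtain ⟨h1, _, _, _, _, _, _, _, _, h10, _⟩ := hp
    calc p.1 i j ≤ ∑ i', p.1 i' j :=
          Finset.single_le_sum (fun i' _ => h1 i' j) (Finset.mem_univ i)
      _ ≤ 1 := h10 j
  -- the compact box
  set lo : BTup I J := (0, 0, 0, 0, 0) with hlo
  set hi : BTup I J := ((fun _ _ => 1), (fun _ => M), M, (fun _ => M), (fun _ _ => M)) with hhi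
  set K : Set (BTup I J) := F ∩ Set.Icc lo hi with hK
  -- clamping: any feasible point is dominated by a point of K
  have hclamp : ∀ p ∈ F, ∃ q ∈ K, cvg p ≤ cvg q := by
    intro p hp
    obtain ⟨h1, h2, h3, h4, h5, h6, h7, h8, h9, h10, h11⟩ := hp
    refine ⟨(p.1, fun i => min (p.2.1 i) M, min p.2.2.1 M,
      fun j => min (p.2.2.2.1 j) M, fun i j => min (p.2.2.2.2 i j) M), ⟨?_, ?_, ?_⟩, ?_⟩
    · refine ⟨h1, fun i => le_min (h2 i) hM0, le_min h3 hM0, fun j => le_min (h4 j) hM0,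
        fun i j => le_min (h5 i j) hM0, h6, ?_, ?_, ?_, h10, h11⟩
      · intro i
        refine le_trans ?_ (h7 i)
        gcongr
        · exact min_le_left _ _
        · exact min_le_left _ _
      · intro j
        have hs : ∑ i, dhat j * p.1 i j ≤ M := by
          calc ∑ i, dhat j * p.1 i j = dhat j * ∑ i, p.1 i j := by
                rw [Finset.mul_sum]
            _ ≤ dhat j * 1 := by
                have := h10 j
                nlinarith [hdhat j]
            _ ≤ M := by rw [mul_one]; exact hdM j
        exact min_add_min_ge h3 (h4 j) hM0 (h8 j) hs
      · intro i j
        have hs : dhat j * p.1 i j ≤ M := by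
          have := hx1 p ⟨h1, h2, h3, h4, h5, h6, h7, h8, h9, h10, h11⟩ i j
          nlinarith [hdhat j, hdM j]
        have := h9 i j
        have := min_add_min_ge (h5 i j) (h2 i) hM0 (by linarith) hs
        linarith
    · exact ⟨fun i j => h1 i j, fun i => le_min (h2 i) hM0, le_min h3 hM0,
        fun j => le_min (h4 j) hM0, fun i j => le_min (h5 i j) hM0⟩
    · exact ⟨fun i j => hx1 p ⟨h1, h2, h3, h4, h5, h6, h7, h8, h9, h10, h11⟩ i j,
        fun i => min_le_right _ _, min_le_right _ _,
        fun j => min_le_right _ _, fun i j => min_le_right _ _⟩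
    · unfold cvg
      unfold coverage
      simp only
      have hτ : min p.2.2.1 M ≤ p.2.2.1 := min_le_left _ _
      have hπ : ∑ j, min (p.2.2.2.1 j) M ≤ ∑ j, p.2.2.2.1 j :=
        Finset.sum_le_sum fun j _ => min_le_left _ _
      have : (Γ : ℝ) * min p.2.2.1 M ≤ (Γ : ℝ) * p.2.2.1 :=
        mul_le_mul_of_nonneg_left hτ (Nat.cast_nonneg Γ)
      linarith
  -- F is closed
  have hFclosed : IsClosed F := by
    have hx : ∀ (i : I) (j : J), Continuous fun p : BTup I J => p.1 i j := by fun_prop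
    have hρ : ∀ (i : I), Continuous fun p : BTup I J => p.2.1 i := by fun_prop
    have hτ : Continuous fun p : BTup I J => p.2.2.1 := by fun_prop
    have hπ : ∀ (j : J), Continuous fun p : BTup I J => p.2.2.2.1 j := by fun_prop
    have hσ : ∀ (i : I) (j : J), Continuous fun p : BTup I J => p.2.2.2.2 i j := by fun_prop
    have e : F = (⋂ i, ⋂ j, {p : BTup I J | 0 ≤ p.1 i j}) ∩
        ((⋂ i, {p : BTup I J | 0 ≤ p.2.1 i}) ∩
        ({p : BTup I J | 0 ≤ p.2.2.1} ∩
        ((⋂ j, {p : BTup I J | 0 ≤ p.2.2.2.1 j}) ∩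
        ((⋂ i, ⋂ j, {p : BTup I J | 0 ≤ p.2.2.2.2 i j}) ∩
        ((⋂ i, ⋂ j, {p : BTup I J | i ∉ cov j → p.1 i j = 0}) ∩
        ((⋂ i, {p : BTup I J | ∑ j, d j * p.1 i j + (Γ : ℝ) * p.2.1 i + ∑ j, p.2.2.2.2 i j ≤ vbar i}) ∩
        ((⋂ j, {p : BTup I J | ∑ i, dhat j * p.1 i j ≤ p.2.2.1 + p.2.2.2.1 j}) ∩
        ((⋂ i, ⋂ j, {p : BTup I J | dhat j * p.1 i j ≤ p.2.2.2.2 i j + p.2.1 i}) ∩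
        ((⋂ j, {p : BTup I J | ∑ i, p.1 i j ≤ 1}) ∩
        (⋂ j, ⋂ i, {p : BTup I J | i ∈ cov j → p.1 i j ≤ ybar i})))))))))) := by
      ext p
      simp only [hFdef, SubFeasible, Set.mem_setOf_eq, Set.mem_inter_iff, Set.mem_iInter]
    have c6 : IsClosed (⋂ i, ⋂ j, {p : BTup I J | i ∉ cov j → p.1 i j = 0}) := by
      refine isClosed_iInter fun i => isClosed_iInter fun j => ?_
      by_cases h : i ∈ cov j
      · simp [h]
      · simpa [h] using isClosed_eq (hx i j) continuous_const
    have c11 : IsClosed (⋂ j, ⋂ i, {p : BTup I J | i ∈ cov j → p.1 i j ≤ ybar i}) := by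
      refine isClosed_iInter fun j => isClosed_iInter fun i => ?_
      by_cases h : i ∈ cov j
      · simpa [h] using isClosed_le (hx i j) continuous_const
      · simp [h]
    rw [e]
    exact (isClosed_iInter fun i => isClosed_iInter fun j =>
        isClosed_le continuous_const (hx i j)).inter
      ((isClosed_iInter fun i => isClosed_le continuous_const (hρ i)).inter
      ((isClosed_le continuous_const hτ).inter
      ((isClosed_iInter fun j => isClosed_le continuous_const (hπ j)).inter
      ((isClosed_iInter fun i => isClosed_iInter fun j =>
          isClosed_le continuous_const (hσ i j)).inter
      (c6.inter
      ((isClosed_iInter fun i => isClosed_le (by fun_prop) continuous_const).inter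
      ((isClosed_iInter fun j => isClosed_le (by fun_prop) (by fun_prop)).inter
      ((isClosed_iInter fun i => isClosed_iInter fun j =>
          isClosed_le (by fun_prop) (by fun_prop)).inter
      ((isClosed_iInter fun j => isClosed_le (by fun_prop) continuous_const).inter
      c11)))))))))
  -- K is compact and nonempty
  have hKcomp : IsCompact K := isCompact_Icc.inter_left hFclosed
  have hzero : (⟨0, 0, 0, 0, 0⟩ : BTup I J) ∈ F := by
    refine ⟨fun i j => le_refl 0, fun i => le_refl 0, le_refl 0, fun j => le_refl 0,
      fun i j => le_refl 0, fun i j _ => rfl, ?_, ?_, ?_, ?_, ?_⟩ <;>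
      simp [hvbar, hybar]
  have hKne : K.Nonempty := by
    refine ⟨⟨0, 0, 0, 0, 0⟩, hzero, ?_, ?_⟩
    · exact ⟨le_refl _, le_refl _, le_refl _, le_refl _, le_refl _⟩
    · exact ⟨fun i j => zero_le_one, fun i => hM0, hM0, fun j => hM0, fun i j => hM0⟩
  -- maximize cvg on K
  obtain ⟨p₀, hp₀K, hp₀max⟩ := hKcomp.exists_isMaxOn hKne hcvgCont.continuousOn
  -- the value set
  set S : Set ℝ := {t : ℝ | ∃ x ρ τ π σ,
    SubFeasible d dhat Γ cov ybar vbar x ρ τ π σ ∧ t = coverage d Γ x τ π} with hS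
  have hub : ∀ t ∈ S, t ≤ cvg p₀ := by
    rintro t ⟨x, ρ, τ, π, σ, hfeas, rfl⟩
    obtain ⟨q, hqK, hle⟩ := hclamp (x, ρ, τ, π, σ) hfeas
    exact le_trans hle (hp₀max hqK)
  have hmem : cvg p₀ ∈ S :=
    ⟨p₀.1, p₀.2.1, p₀.2.2.1, p₀.2.2.2.1, p₀.2.2.2.2, hp₀K.1, rfl⟩
  have hsup : phi' d dhat Γ cov ybar vbar = cvg p₀ := by
    rw [phi']
    exact le_antisymm (csSup_le ⟨_, hmem⟩ hub) (le_csSup ⟨_, hub⟩ hmem)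
  exact ⟨p₀.1, p₀.2.1, p₀.2.2.1, p₀.2.2.2.1, p₀.2.2.2.2, hp₀K.1, by rw [hsup]⟩
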